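/- Let p be a prime, m ≥ 1, and C_m = {a_0, ..., a_{p^m - 1}} the set of p-adic integers with δ^m a = 0, indexed so that a_α ≡ α (mod p^m) for α ∈ {0,...,p^m-1}. Let W be the p^m × p^m matrix with rows indexed by α ∈ {0,...,p^m-1} and columns indexed by β ∈ {0,...,p-1}^m, with entries w_{αβ} = (a_α)^{β_0} (δ a_α)^{β_1} ⋯ (δ^{m-1} a_α)^{β_{m-1}}. Then det W is a unit in Z_p. -/

import Mathlib

open Matrix Finset

private lemma padic_dvd_iff_toZMod_eq (p : ℕ) [Fact p.Prime] (x y : ℤ_[p]) :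
    PadicInt.toZMod x = PadicInt.toZMod y ↔ (p : ℤ_[p]) ∣ x - y := by
  rw [← sub_eq_zero, ← map_sub, ← RingHom.mem_ker, PadicInt.ker_toZMod,
    PadicInt.maximalIdeal_eq_span_p, Ideal.mem_span_singleton]

private lemma padic_step (p : ℕ) [hp : Fact p.Prime] (δ : ℤ_[p] → ℤ_[p])
    (hδ : ∀ x : ℤ_[p], (p : ℤ_[p]) * δ x = x - x ^ p) {x y : ℤ_[p]} (k : ℕ)
    (h1 : PadicInt.toZMod x = PadicInt.toZMod y)
    (hk : (p : ℤ_[p]) ^ k ∣ x - y) (hd : (p : ℤ_[p]) ^ k ∣ δ x - δ y) :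
    (p : ℤ_[p]) ^ (k + 1) ∣ x - y := by
  have hxy : x - y = (p : ℤ_[p]) * (δ x - δ y) + (x ^ p - y ^ p) := by
    linear_combination hδ y - hδ x
  set S : ℤ_[p] := ∑ i ∈ Finset.range p, x ^ i * y ^ (p - 1 - i) with hSdef
  have hS : x ^ p - y ^ p = S * (x - y) := (geom_sum₂_mul x y p).symm
  have hpS : (p : ℤ_[p]) ∣ S := by
    rw [← sub_zero S, ← padic_dvd_iff_toZMod_eq]
    have hterm : ∀ i ∈ Finset.range p,
        PadicInt.toZMod (x ^ i * y ^ (p - 1 - i)) = (PadicInt.toZMod y) ^ (p - 1) := by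
      intro i hi
      rw [Finset.mem_range] at hi
      rw [_root_.map_mul, _root_.map_pow, _root_.map_pow, h1, ← pow_add]
      congr 1
      omega
    rw [hSdef, map_sum, Finset.sum_congr rfl hterm, Finset.sum_const, Finset.card_range,
      nsmul_eq_mul, map_zero]
    simp
  rw [hxy, hS]
  have h1' : (p : ℤ_[p]) ^ (k + 1) ∣ (p : ℤ_[p]) * (δ x - δ y) := by
    rw [pow_succ']
    exact mul_dvd_mul_left _ hd
  have h2' : (p : ℤ_[p]) ^ (k + 1) ∣ S * (x - y) := by
    rw [pow_succ']
    exact mul_dvd_mul hpS hk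
  exact dvd_add h1' h2'

private lemma padic_key (p : ℕ) [hp : Fact p.Prime] (δ : ℤ_[p] → ℤ_[p])
    (hδ : ∀ x : ℤ_[p], (p : ℤ_[p]) * δ x = x - x ^ p) :
    ∀ j : ℕ, ∀ x y : ℤ_[p],
      (∀ i, i < j → PadicInt.toZMod (δ^[i] x) = PadicInt.toZMod (δ^[i] y)) →
      (p : ℤ_[p]) ^ j ∣ x - y := by
  intro j
  induction j with
  | zero => intro x y _; simp
  | succ j ih =>
    intro x y h
    have h0 : PadicInt.toZMod x = PadicInt.toZMod y := by
      simpa using h 0 (Nat.succ_pos j)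
    have hx : (p : ℤ_[p]) ^ j ∣ x - y :=
      ih x y fun i hi => h i (hi.trans j.lt_succ_self)
    have hd : (p : ℤ_[p]) ^ j ∣ δ x - δ y := by
      refine ih (δ x) (δ y) fun i hi => ?_
      have := h (i + 1) (Nat.succ_lt_succ hi)
      simpa [Function.iterate_succ_apply] using this
    exact padic_step p δ hδ j h0 hx hd

private lemma det_monomial_matrix (p : ℕ) [hp : Fact p.Prime] (m : ℕ) :
    (Matrix.of fun v β : Fin m → Fin p =>
      ∏ i : Fin m, (((v i : ℕ) : ZMod p)) ^ ((β i : ℕ))).det ≠ 0 := by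
  induction m with
  | zero =>
    rw [Matrix.det_unique]
    simp
  | succ m ih =>
    have hV : (Matrix.vandermonde fun j : Fin p => ((j : ℕ) : ZMod p)).det ≠ 0 := by
      rw [Matrix.det_vandermonde_ne_zero_iff]
      intro i j hij
      have hij' : (((i : ℕ) : ZMod p)) = ((j : ℕ) : ZMod p) := hij
      apply Fin.ext
      rw [← ZMod.val_cast_of_lt (show (i : ℕ) < p from i.isLt),
        ← ZMod.val_cast_of_lt (show (j : ℕ) < p from j.isLt), hij']
    set V := Matrix.vandermonde fun j : Fin p => ((j : ℕ) : ZMod p) with hVdef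
    set N := Matrix.of fun v β : Fin m → Fin p =>
      ∏ i : Fin m, (((v i : ℕ) : ZMod p)) ^ ((β i : ℕ)) with hNdef
    have key : (Matrix.of fun v β : Fin (m + 1) → Fin p =>
        ∏ i : Fin (m + 1), (((v i : ℕ) : ZMod p)) ^ ((β i : ℕ))) =
        (Matrix.kroneckerMap (· * ·) V N).submatrix
          (Fin.consEquiv fun _ : Fin (m + 1) => Fin p).symm
            (Fin.consEquiv fun _ : Fin (m + 1) => Fin p).symm := by
      ext v β
      rw [Matrix.of_apply, Fin.prod_univ_succ]
      rfl
    rw [key, Matrix.det_submatrix_equiv_self, Matrix.det_kronecker]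
    exact mul_ne_zero (pow_ne_zero _ hV) (pow_ne_zero _ ih)

theorem det_of_matrix_associated_to_p_pow_m_isUnit (p : ℕ) [Fact p.Prime]
    (δ : ℤ_[p] → ℤ_[p]) (hδ : ∀ x : ℤ_[p], (p : ℤ_[p]) * δ x = x - x ^ p)
    (m : ℕ) (hm : 1 ≤ m) (a : Fin (p ^ m) → ℤ_[p])
    (ha : ∀ α : Fin (p ^ m), δ^[m] (a α) = 0)
    (hind : ∀ α : Fin (p ^ m),
      PadicInt.toZModPow m (a α) = ((α : ℕ) : ZMod (p ^ m)))
    (e : Fin (p ^ m) ≃ (Fin m → Fin p)) :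
    IsUnit (Matrix.det
      (Matrix.of fun α α' : Fin (p ^ m) =>
        ∏ i : Fin m, (δ^[(i : ℕ)] (a α)) ^ ((e α' i : ℕ)))) := by
  haveI : NeZero (p ^ m) := ⟨pow_ne_zero _ (Fact.out (p := p.Prime)).ne_zero⟩
  set φ := (PadicInt.toZMod : ℤ_[p] →+* ZMod p) with hφ
  set M := Matrix.of fun α α' : Fin (p ^ m) =>
      ∏ i : Fin m, (δ^[(i : ℕ)] (a α)) ^ ((e α' i : ℕ)) with hM
  by_contra hu
  have hker : φ M.det = 0 := by
    rw [hφ, ← RingHom.mem_ker, PadicInt.ker_toZMod]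
    exact (IsLocalRing.mem_maximalIdeal _).mpr (mem_nonunits_iff.mpr hu)
  set f : Fin (p ^ m) → Fin m → ZMod p := fun α i => φ (δ^[(i : ℕ)] (a α)) with hf
  have finj : Function.Injective f := by
    intro α α' hfa
    have hdvd : (p : ℤ_[p]) ^ m ∣ a α - a α' := by
      apply padic_key p δ hδ m
      intro i hi
      exact congrFun hfa ⟨i, hi⟩
    have hmod : PadicInt.toZModPow m (a α) = PadicInt.toZModPow m (a α') := by
      rw [← sub_eq_zero, ← map_sub, ← RingHom.mem_ker, PadicInt.ker_toZModPow,
        Ideal.mem_span_singleton]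
      exact hdvd
    rw [hind α, hind α'] at hmod
    apply Fin.ext
    rw [← ZMod.val_cast_of_lt α.isLt, ← ZMod.val_cast_of_lt α'.isLt, hmod]
  set r : Fin (p ^ m) → Fin m → Fin p := fun α i => ⟨(f α i).val, ZMod.val_lt _⟩ with hr
  have rinj : Function.Injective r := by
    intro α α' h
    apply finj
    funext i
    have hv : (f α i).val = (f α' i).val := congrArg Fin.val (congrFun h i)
    rw [← ZMod.natCast_zmod_val (f α i), ← ZMod.natCast_zmod_val (f α' i), hv]
  have rbij : Function.Bijective r := by
    rw [Fintype.bijective_iff_injective_and_card]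
    exact ⟨rinj, by simp [Fintype.card_fun]⟩
  set R := Equiv.ofBijective r rbij with hR
  set N := Matrix.of fun v β : Fin m → Fin p =>
      ∏ i : Fin m, (((v i : ℕ) : ZMod p)) ^ ((β i : ℕ)) with hN
  have hmap : M.map φ = N.submatrix R e := by
    ext α α'
    simp only [hM, hN, Matrix.map_apply, Matrix.submatrix_apply, Matrix.of_apply,
      map_prod, _root_.map_pow]
    apply Finset.prod_congr rfl
    intro i _
    congr 1
    show f α i = ((r α i : ℕ) : ZMod p)
    rw [show ((r α i : ℕ)) = (f α i).val from rfl, ZMod.natCast_zmod_val]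
  have hsub : N.submatrix R e = (N.submatrix R R).submatrix id (e.trans R.symm) := by
    ext α α'
    simp [Matrix.submatrix_apply]
  have hdet0 : (M.map φ).det ≠ 0 := by
    rw [hmap, hsub, Matrix.det_permute', Matrix.det_submatrix_equiv_self]
    have hN0 := det_monomial_matrix p m
    rcases Int.units_eq_one_or (Equiv.Perm.sign (e.trans R.symm)) with h | h <;>
      simp [h, hN, hN0, neg_eq_zero]
  apply hdet0
  rw [show M.map ⇑φ = φ.mapMatrix M from rfl, ← RingHom.map_det]
  exact hker
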